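/- Let t be a positive integer, k > 0, and let q_t(l) denote the probability that a simple symmetric random walk on ℤ is at l after t steps. Define the truncation q̃_t(x) = ∑_{|l| ≤ k} q_t(l) T_{|l|}(x). Then max over x in [−1,1] of |x^t − q̃_t(x)| ≤ ∑_{|l| > k} q_t(l) ≤ 2 exp(−k²/(2t)). -/
import Mathlib


open Finset Polynomial

/-- `rwProb t l` is the probability that a simple symmetric random walk on `ℤ`
starting at `0` is at position `l` after `t` steps. -/
noncomputable def rwProb (t : ℕ) (l : ℤ) : ℝ :=
  if (t + l.natAbs) % 2 = 0 ∧ l.natAbs ≤ t then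
    (t.choose ((t + l).toNat / 2) : ℝ) / 2 ^ t
  else 0

lemma rwProb_nonneg (t : ℕ) (l : ℤ) : 0 ≤ rwProb t l := by
  unfold rwProb; split <;> positivity

lemma rwProb_eq_zero (t : ℕ) (l : ℤ) (h : (t : ℤ) < l.natAbs) : rwProb t l = 0 := by
  unfold rwProb; rw [if_neg]; omega

lemma rw_sum_eq (t : ℕ) (F : ℤ → ℝ) :
    ∑ l ∈ Finset.Icc (-(t : ℤ)) t, rwProb t l * F l
      = ∑ j ∈ Finset.range (t + 1), (t.choose j : ℝ) / 2 ^ t * F (2 * j - t) := by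
  rw [← Finset.sum_filter_of_ne
      (p := fun l : ℤ => (t + l.natAbs) % 2 = 0 ∧ l.natAbs ≤ t)
      (fun l _ h => by
        by_contra hc
        exact h (by rw [rwProb, if_neg hc, zero_mul]))]
  refine Finset.sum_nbij' (i := fun l => ((l + t).toNat) / 2)
    (j := fun j => 2 * (j : ℤ) - t) ?_ ?_ ?_ ?_ ?_
  · intro l hl
    simp only [Finset.mem_filter, Finset.mem_Icc] at hl
    simp only [Finset.mem_range]
    omega
  · intro j hj
    simp only [Finset.mem_range] at hj
    simp only [Finset.mem_filter, Finset.mem_Icc]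
    omega
  · intro l hl
    simp only [Finset.mem_filter, Finset.mem_Icc] at hl
    show 2 * (((l + (t : ℤ)).toNat / 2 : ℕ) : ℤ) - (t : ℤ) = l
    omega
  · intro j hj
    simp only [Finset.mem_range] at hj
    beta_reduce
    omega
  · intro l hl
    simp only [Finset.mem_filter, Finset.mem_Icc] at hl
    rw [rwProb, if_pos ⟨hl.2.1, hl.2.2⟩]
    have h2 : ((t : ℤ) + l).toNat / 2 = (l + (t : ℤ)).toNat / 2 := by omega
    have h3 : 2 * (((l + (t : ℤ)).toNat / 2 : ℕ) : ℤ) - (t : ℤ) = l := by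
      omega
    beta_reduce
    rw [h2, h3]

lemma rw_mgf_aux (t : ℕ) (μ : ℝ) :
    ∑ j ∈ Finset.range (t + 1), (t.choose j : ℝ) / 2 ^ t * Real.exp (μ * ((2 * j - t : ℤ) : ℝ))
      = ((Real.exp μ + Real.exp (-μ)) / 2) ^ t := by
  rw [div_pow, add_pow, Finset.sum_div]
  refine Finset.sum_congr rfl fun j hj => ?_
  simp only [Finset.mem_range] at hj
  rw [← Real.exp_nat_mul, ← Real.exp_nat_mul, ← Real.exp_add]
  rw [div_mul_eq_mul_div, mul_comm ((t.choose j : ℝ))]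
  rw [mul_div_assoc, mul_div_assoc]
  congr 2
  have : ((t - j : ℕ) : ℝ) = (t : ℝ) - j := by
    rw [Nat.cast_sub (by omega)]
  rw [this]
  push_cast
  ring

lemma rw_mgf (t : ℕ) (μ : ℝ) :
    ∑ l ∈ Finset.Icc (-(t : ℤ)) t, rwProb t l * Real.exp (μ * l)
      = ((Real.exp μ + Real.exp (-μ)) / 2) ^ t := by
  have h := rw_sum_eq t (fun l => Real.exp (μ * l))
  beta_reduce at h
  rw [h]
  exact rw_mgf_aux t μ

lemma cos_pow_expand (t : ℕ) (θ : ℝ) :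
    Real.cos θ ^ t = ∑ j ∈ Finset.range (t + 1),
      (t.choose j : ℝ) / 2 ^ t * Real.cos (((2 * j - t : ℤ) : ℝ) * θ) := by
  have key : ((2 : ℂ) * Complex.cos θ) ^ t
      = ∑ j ∈ Finset.range (t + 1),
          (t.choose j : ℂ) * Complex.exp ((((2 * j - t : ℤ) : ℝ) * θ : ℝ) * Complex.I) := by
    rw [Complex.two_cos, add_pow]
    refine Finset.sum_congr rfl fun j hj => ?_
    simp only [Finset.mem_range] at hj
    rw [← Complex.exp_nat_mul, ← Complex.exp_nat_mul, ← Complex.exp_add, mul_comm]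
    congr 1
    have : ((t - j : ℕ) : ℂ) = (t : ℂ) - j := by
      rw [Nat.cast_sub (by omega)]
    rw [this]
    push_cast
    ring
  have hre := congrArg Complex.re key
  have hL : (((2 : ℂ) * Complex.cos θ) ^ t).re = (2 * Real.cos θ) ^ t := by
    rw [← Complex.ofReal_cos]
    norm_cast
  have hR : (∑ j ∈ Finset.range (t + 1),
        (t.choose j : ℂ) * Complex.exp ((((2 * j - t : ℤ) : ℝ) * θ : ℝ) * Complex.I)).re
      = ∑ j ∈ Finset.range (t + 1),
        (t.choose j : ℝ) * Real.cos (((2 * j - t : ℤ) : ℝ) * θ) := by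
    rw [Complex.re_sum]
    refine Finset.sum_congr rfl fun j _ => ?_
    rw [show ((t.choose j : ℂ)) = ((t.choose j : ℝ) : ℂ) by push_cast; ring,
      Complex.re_ofReal_mul, Complex.exp_ofReal_mul_I_re]
  rw [hL, hR] at hre
  rw [mul_pow] at hre
  have h : Real.cos θ ^ t = (2 ^ t * Real.cos θ ^ t) / 2 ^ t := by field_simp
  rw [h, hre, Finset.sum_div]
  refine Finset.sum_congr rfl fun j _ => ?_
  push_cast
  ring


/-- Truncated Chebyshev expansion of `x^t`: for a positive integer `t` and `k > 0`,
letting `q̃_t(x) = ∑_{|l| ≤ k} q_t(l) T_{|l|}(x)`, one has for all `x ∈ [−1, 1]`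
`|x^t − q̃_t(x)| ≤ ∑_{|l| > k} q_t(l) ≤ 2·exp(−k²/(2t))`. -/
theorem chebyshev_truncation_bound (t : ℕ) (ht : 0 < t) (k : ℝ) (hk : 0 < k)
    (x : ℝ) (hx : x ∈ Set.Icc (-1 : ℝ) 1) :
    |x ^ t - ∑ l ∈ Finset.Icc (-(t : ℤ)) t,
        (if (|l| : ℝ) ≤ k then rwProb t l * (Polynomial.Chebyshev.T ℝ |l|).eval x else 0)| ≤
      ∑' l : ℤ, (if k < (|l| : ℝ) then rwProb t l else 0) ∧
    ∑' l : ℤ, (if k < (|l| : ℝ) then rwProb t l else 0) ≤ 2 * Real.exp (-k ^ 2 / (2 * t)) := by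
  have htR : (0 : ℝ) < t := by exact_mod_cast ht
  -- tsum equals finite sum
  have htsum : ∑' l : ℤ, (if k < (|l| : ℝ) then rwProb t l else 0)
      = ∑ l ∈ Finset.Icc (-(t : ℤ)) t, (if k < (|l| : ℝ) then rwProb t l else 0) := by
    refine tsum_eq_sum fun l hl => ?_
    simp only [Finset.mem_Icc, not_and_or, not_le] at hl
    have h0 : rwProb t l = 0 := rwProb_eq_zero t l (by omega)
    simp [h0]
  -- Chebyshev expansion of x^t
  set θ := Real.arccos x with hθ
  have hcos : Real.cos θ = x := Real.cos_arccos hx.1 hx.2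
  have hexp : x ^ t = ∑ l ∈ Finset.Icc (-(t : ℤ)) t,
      rwProb t l * (Polynomial.Chebyshev.T ℝ |l|).eval x := by
    have h := rw_sum_eq t (fun l => (Polynomial.Chebyshev.T ℝ |l|).eval x)
    beta_reduce at h
    rw [h, ← hcos, cos_pow_expand t θ]
    refine Finset.sum_congr rfl fun j _ => ?_
    rw [Polynomial.Chebyshev.T_real_cos]
    congr 1
    rcases abs_choice (2 * (j : ℤ) - t) with hab | hab <;> rw [hab]
    push_cast
    rw [neg_mul, Real.cos_neg]
  have hTle : ∀ l : ℤ, |(Polynomial.Chebyshev.T ℝ |l|).eval x| ≤ 1 := by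
    intro l
    rw [← hcos, Polynomial.Chebyshev.T_real_cos]
    exact Real.abs_cos_le_one _
  constructor
  · -- first inequality
    rw [htsum, hexp, ← Finset.sum_sub_distrib]
    have hdiff : ∀ l ∈ Finset.Icc (-(t : ℤ)) t,
        rwProb t l * (Polynomial.Chebyshev.T ℝ |l|).eval x -
          (if (|l| : ℝ) ≤ k then rwProb t l * (Polynomial.Chebyshev.T ℝ |l|).eval x else 0)
        = (if k < (|l| : ℝ) then rwProb t l * (Polynomial.Chebyshev.T ℝ |l|).eval x else 0) := by
      intro l _
      by_cases hc : (|l| : ℝ) ≤ k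
      · rw [if_pos hc, if_neg (not_lt.2 hc), sub_self]
      · rw [if_neg hc, if_pos (not_le.1 hc), sub_zero]
    rw [Finset.sum_congr rfl hdiff]
    refine (Finset.abs_sum_le_sum_abs _ _).trans (Finset.sum_le_sum fun l _ => ?_)
    by_cases hc : k < (|l| : ℝ)
    · rw [if_pos hc, if_pos hc, abs_mul, abs_of_nonneg (rwProb_nonneg t l)]
      exact mul_le_of_le_one_right (rwProb_nonneg t l) (hTle l)
    · simp [hc]
  · -- second inequality: Chernoff
    rw [htsum]
    set lam : ℝ := k / t with hlam
    have hlam0 : 0 < lam := div_pos hk htR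
    have step1 : ∑ l ∈ Finset.Icc (-(t : ℤ)) t, (if k < (|l| : ℝ) then rwProb t l else 0)
        ≤ ∑ l ∈ Finset.Icc (-(t : ℤ)) t,
            rwProb t l * (Real.exp (lam * (l - k)) + Real.exp (lam * (-l - k))) := by
      refine Finset.sum_le_sum fun l _ => ?_
      by_cases hc : k < (|l| : ℝ)
      · rw [if_pos hc]
        have hq := rwProb_nonneg t l
        rcases le_or_gt 0 l with hl | hl
        · have hkl : k < (l : ℝ) := by
            rwa [abs_of_nonneg (by exact_mod_cast hl : (0 : ℝ) ≤ (l : ℝ))] at hc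
          have hA : 1 ≤ Real.exp (lam * (l - k)) := by
            rw [← Real.exp_zero]
            apply Real.exp_le_exp.2
            nlinarith
          have hB : 0 < Real.exp (lam * (-l - k)) := Real.exp_pos _
          push_cast
          push_cast at hA hB
          nlinarith
        · have hkl : k < -(l : ℝ) := by
            rwa [abs_of_neg (by exact_mod_cast hl : (l : ℝ) < 0)] at hc
          have hA : 1 ≤ Real.exp (lam * (-l - k)) := by
            rw [← Real.exp_zero]
            apply Real.exp_le_exp.2
            push_cast
            nlinarith
          have hB : 0 < Real.exp (lam * ((l : ℝ) - k)) := Real.exp_pos _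
          push_cast
          push_cast at hA hB
          nlinarith
      · rw [if_neg hc]
        exact mul_nonneg (rwProb_nonneg t l) (by positivity)
    have step2 : ∑ l ∈ Finset.Icc (-(t : ℤ)) t,
            rwProb t l * (Real.exp (lam * (l - k)) + Real.exp (lam * (-l - k)))
        = Real.exp (-(lam * k)) *
            ((∑ l ∈ Finset.Icc (-(t : ℤ)) t, rwProb t l * Real.exp (lam * l)) +
             (∑ l ∈ Finset.Icc (-(t : ℤ)) t, rwProb t l * Real.exp ((-lam) * l))) := by
      rw [mul_add, Finset.mul_sum, Finset.mul_sum, ← Finset.sum_add_distrib]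
      refine Finset.sum_congr rfl fun l _ => ?_
      rw [show lam * ((l : ℝ) - k) = lam * l + -(lam * k) by ring,
        show lam * (-(l : ℝ) - k) = (-lam) * l + -(lam * k) by ring,
        Real.exp_add, Real.exp_add]
      ring
    rw [rw_mgf t lam, rw_mgf t (-lam), neg_neg] at step2
    have hcosh : (Real.exp lam + Real.exp (-lam)) / 2 = Real.cosh lam :=
      (Real.cosh_eq lam).symm
    have hcosh2 : (Real.exp (-lam) + Real.exp lam) / 2 = Real.cosh lam := by
      rw [add_comm]; exact hcosh
    rw [hcosh, hcosh2] at step2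
    have step3 : Real.exp (-(lam * k)) * (Real.cosh lam ^ t + Real.cosh lam ^ t)
        ≤ Real.exp (-(lam * k)) * (2 * Real.exp (lam ^ 2 / 2) ^ t) := by
      have hc1 : Real.cosh lam ^ t ≤ Real.exp (lam ^ 2 / 2) ^ t :=
        pow_le_pow_left₀ (Real.cosh_pos lam).le (Real.cosh_le_exp_half_sq lam) t
      have := Real.exp_pos (-(lam * k))
      nlinarith
    have step4 : Real.exp (-(lam * k)) * (2 * Real.exp (lam ^ 2 / 2) ^ t)
        = 2 * Real.exp (-k ^ 2 / (2 * t)) := by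
      rw [← Real.exp_nat_mul, mul_left_comm, ← Real.exp_add]
      congr 1
      have hne : (t : ℝ) ≠ 0 := ne_of_gt htR
      simp only [hlam]
      field_simp
      ring
    calc ∑ l ∈ Finset.Icc (-(t : ℤ)) t, (if k < (|l| : ℝ) then rwProb t l else 0)
        ≤ _ := step1
      _ = _ := step2
      _ ≤ _ := step3
      _ = _ := step4
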